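/- Let β ∈ [0,1/4] and let u ∈ ℝ^n satisfy ∑_{j=1}^n u_j = n and 1−β ≤ u_j ≤ 1+β for all j. Then (2(1−β) + 6(1−β)ln(1−β) + 6(1−β)ln²(1−β))·n·δ(u) ≤ Δ22(u) ≤ (2(1+β) + 6(1+β)ln(1+β) + 6(1+β)ln²(1+β))·n·δ(u). -/

import Mathlib

/-- The entropy proximity measure `δ(u) = (1/n) ∑ u_j ln u_j`. -/
noncomputable def entropyDelta (n : ℕ) (u : Fin n → ℝ) : ℝ :=
  (1 / (n : ℝ)) * ∑ j, u j * Real.log (u j)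

/-- `Δ22(u) = ∑ u_j² ln² u_j`. -/
noncomputable def Delta22 (n : ℕ) (u : Fin n → ℝ) : ℝ :=
  ∑ j, (u j) ^ 2 * Real.log (u j) ^ 2

open Real Finset

-- exp(-y) ≥ 1 - y + y²/2 - y³/6 for y ∈ [0,1/2]
lemma exp_neg_cubic {y : ℝ} (h0 : 0 ≤ y) (h1 : y ≤ 1/2) :
    1 - y + y^2/2 - y^3/6 ≤ Real.exp (-y) := by
  have hb := Real.exp_bound' h0 (by linarith) (n := 4) (by norm_num)
  have hA : Real.exp y ≤ 1 + y + y^2/2 + y^3/6 + y^4 * 5 / 96 := by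
    have hs : (∑ m ∈ Finset.range 4, y ^ m / m.factorial) = 1 + y + y^2/2 + y^3/6 := by
      norm_num [Finset.sum_range_succ, Nat.factorial]
    rw [hs] at hb
    calc Real.exp y ≤ 1 + y + y^2/2 + y^3/6 + y ^ 4 * (4+1) / (Nat.factorial 4 * 4) := hb
      _ = 1 + y + y^2/2 + y^3/6 + y^4 * 5 / 96 := by norm_num [Nat.factorial]
  have hpos : (0:ℝ) < Real.exp y := Real.exp_pos y
  have hC : 0 ≤ 1 - y + y^2/2 - y^3/6 := by nlinarith
  have key : (1 - y + y^2/2 - y^3/6) * Real.exp y ≤ 1 := by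
    have := mul_le_mul_of_nonneg_left hA hC
    nlinarith [pow_nonneg h0 4, pow_nonneg h0 5, pow_nonneg h0 6, pow_nonneg h0 7]
  have h2 : 1 - y + y^2/2 - y^3/6 ≤ 1 / Real.exp y := (le_div_iff₀ hpos).mpr key
  rwa [Real.exp_neg, ← one_div]

-- cubic lower bound on exp for x ∈ [-1/2, 0]
lemma exp_cubic {x : ℝ} (h0 : -(1/2) ≤ x) (h1 : x ≤ 0) :
    1 + x + x^2/2 + x^3/6 ≤ Real.exp x := by
  have h := exp_neg_cubic (y := -x) (by linarith) (by linarith)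
  have he : -(-x) = x := by ring
  rw [he] at h
  nlinarith [h]

lemma log_le_aux1 {u : ℝ} (h : 1 ≤ u) : Real.log u ≤ (u^2-1)/(2*u) := by
  have hu : (0:ℝ) < u := by linarith
  have hx : 0 ≤ (u^2-1)/(2*u) := by
    apply div_nonneg _ (by linarith); nlinarith
  have hq := Real.quadratic_le_exp_of_nonneg hx
  have hdiff : 1 + (u^2-1)/(2*u) + ((u^2-1)/(2*u))^2/2 - u = (u-1)^4/(8*u^2) := by
    field_simp; ring
  have hle : u ≤ 1 + (u^2-1)/(2*u) + ((u^2-1)/(2*u))^2/2 := by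
    nlinarith [pow_pos hu 2, sq_nonneg ((u-1)^2), div_nonneg (pow_nonneg (by linarith : (0:ℝ) ≤ u-1) 4) (by positivity : (0:ℝ) ≤ 8*u^2)]
  exact (Real.log_le_iff_le_exp hu).mpr (hle.trans hq)

lemma log_ge_aux1 {u : ℝ} (h0 : 0 < u) (h1 : u ≤ 1) : (u^2-1)/(2*u) ≤ Real.log u := by
  have hv : 1 ≤ 1/u := by rw [le_div_iff₀ h0]; linarith
  have := log_le_aux1 hv
  rw [Real.log_div one_ne_zero (ne_of_gt h0), Real.log_one] at this
  have heq : ((1/u)^2 - 1)/(2*(1/u)) = -((u^2-1)/(2*u)) := by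
    field_simp; ring
  rw [heq] at this
  linarith

-- log u ≤ (u-1)(3u-1)/(2u²) for u ∈ [3/4, 1]
lemma log_le_aux2 {u : ℝ} (h0 : 3/4 ≤ u) (h1 : u ≤ 1) :
    Real.log u ≤ (u-1)*(3*u-1)/(2*u^2) := by
  have hu : (0:ℝ) < u := by linarith
  set x := (u-1)*(3*u-1)/(2*u^2) with hxdef
  have hx0 : x ≤ 0 := by
    apply div_nonpos_of_nonpos_of_nonneg _ (by positivity)
    nlinarith
  have hx1 : -(1/2) ≤ x := by
    rw [hxdef, neg_le, ← neg_div]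
    rw [div_le_iff₀ (by positivity)]
    nlinarith
  have hq := exp_cubic hx1 hx0
  have hle : u ≤ 1 + x + x^2/2 + x^3/6 := by
    rw [← sub_nonneg]
    have hdiff : 1 + x + x^2/2 + x^3/6 - u =
        ((2*u^2)^3 * (1 - u) + (u-1)*(3*u-1)*(2*u^2)^2 + ((u-1)*(3*u-1))^2*(2*u^2)/2 + ((u-1)*(3*u-1))^3/6) / (2*u^2)^3 := by
      rw [hxdef]; field_simp; ring
    rw [hdiff]
    apply div_nonneg _ (by positivity)
    nlinarith [sq_nonneg (u-1), sq_nonneg u, pow_nonneg (by linarith : (0:ℝ) ≤ 1-u) 3, sq_nonneg ((u-1)*u), sq_nonneg ((1-u)*(1-u))]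
  exact (Real.log_le_iff_le_exp hu).mpr (hle.trans hq)

-- log w ≤ (w-1)(3-w)/2 for w ∈ [4/5, 1]
lemma log_le_aux3 {w : ℝ} (h0 : 4/5 ≤ w) (h1 : w ≤ 1) :
    Real.log w ≤ (w-1)*(3-w)/2 := by
  have hw : (0:ℝ) < w := by linarith
  set x := (w-1)*(3-w)/2 with hxdef
  have hx0 : x ≤ 0 := by
    apply div_nonpos_of_nonpos_of_nonneg _ (by norm_num)
    nlinarith
  have hx1 : -(1/2) ≤ x := by rw [hxdef]; nlinarith
  have hq := exp_cubic hx1 hx0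
  have hle : w ≤ 1 + x + x^2/2 + x^3/6 := by
    rw [← sub_nonneg]
    have hdiff : 1 + x + x^2/2 + x^3/6 - w =
        (48*(1-w) + 24*(w-1)*(3-w) + 6*((w-1)*(3-w))^2 + ((w-1)*(3-w))^3) / 48 := by
      rw [hxdef]; ring
    rw [hdiff]
    apply div_nonneg _ (by norm_num)
    nlinarith [sq_nonneg (w-1), sq_nonneg ((1-w)*(3-w)), pow_nonneg (by linarith : (0:ℝ) ≤ 1-w) 3]
  exact (Real.log_le_iff_le_exp hw).mpr (hle.trans hq)

-- log u ≥ (u-1)(3u-1)/(2u²) for u ∈ [1, 5/4]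
lemma log_ge_aux2 {u : ℝ} (h0 : 1 ≤ u) (h1 : u ≤ 5/4) :
    (u-1)*(3*u-1)/(2*u^2) ≤ Real.log u := by
  have hu : (0:ℝ) < u := by linarith
  have hw0 : 4/5 ≤ 1/u := by rw [le_div_iff₀ hu]; linarith
  have hw1 : 1/u ≤ 1 := by rw [div_le_one hu]; linarith
  have h := log_le_aux3 hw0 hw1
  rw [Real.log_div one_ne_zero (ne_of_gt hu), Real.log_one] at h
  have heq : (1/u-1)*(3-1/u)/2 = -((u-1)*(3*u-1)/(2*u^2)) := by
    field_simp; ring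
  rw [heq] at h
  linarith

lemma log_le_sub_one {u : ℝ} (h : 0 < u) : Real.log u ≤ u - 1 :=
  Real.log_le_sub_one_of_pos h

lemma log_ge_one_sub_inv {u : ℝ} (h : 0 < u) : 1 - 1/u ≤ Real.log u := by
  have hv : (0:ℝ) < 1/u := by positivity
  have := Real.log_le_sub_one_of_pos hv
  rw [Real.log_div one_ne_zero (ne_of_gt h), Real.log_one] at this
  linarith


-- upper bound on g(u) = u log u - u + 1
lemma gA {β u : ℝ} (hβ0 : 0 ≤ β) (hβ1 : β ≤ 1/4) (hl : 1 - β ≤ u) (hu : u ≤ 1 + β) :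
    u * Real.log u - u + 1 ≤ (u-1)^2 / (2*(1-β)) := by
  have hup : (0:ℝ) < u := by linarith
  have hb : (0:ℝ) < 1 - β := by linarith
  rcases le_or_gt 1 u with h1 | h1
  · have hlog := log_le_aux1 h1
    have h2 : u * Real.log u ≤ u * ((u^2-1)/(2*u)) := by
      exact mul_le_mul_of_nonneg_left hlog (le_of_lt hup)
    have h3 : u * ((u^2-1)/(2*u)) = (u^2-1)/2 := by field_simp
    rw [h3] at h2
    have h4 : (u-1)^2/2 ≤ (u-1)^2/(2*(1-β)) := by
      apply div_le_div_of_nonneg_left (sq_nonneg _) (by linarith) (by linarith)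
    nlinarith
  · have hlog := log_le_aux2 (by linarith : 3/4 ≤ u) (le_of_lt h1)
    have h2 : u * Real.log u ≤ u * ((u-1)*(3*u-1)/(2*u^2)) :=
      mul_le_mul_of_nonneg_left hlog (le_of_lt hup)
    have h3 : u * ((u-1)*(3*u-1)/(2*u^2)) - u + 1 = (u-1)^2/(2*u) := by
      field_simp; ring
    have h4 : (u-1)^2/(2*u) ≤ (u-1)^2/(2*(1-β)) := by
      apply div_le_div_of_nonneg_left (sq_nonneg _) (by linarith) (by linarith)
    linarith
-- lower bound on g(u)
lemma gB {β u : ℝ} (hβ0 : 0 ≤ β) (hβ1 : β ≤ 1/4) (hl : 1 - β ≤ u) (hu : u ≤ 1 + β) :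
    (u-1)^2 / (2*(1+β)) ≤ u * Real.log u - u + 1 := by
  have hup : (0:ℝ) < u := by linarith
  rcases le_or_gt 1 u with h1 | h1
  · have hlog := log_ge_aux2 h1 (by linarith : u ≤ 5/4)
    have h2 : u * ((u-1)*(3*u-1)/(2*u^2)) ≤ u * Real.log u :=
      mul_le_mul_of_nonneg_left hlog (le_of_lt hup)
    have h3 : u * ((u-1)*(3*u-1)/(2*u^2)) - u + 1 = (u-1)^2/(2*u) := by
      field_simp; ring
    have h4 : (u-1)^2/(2*(1+β)) ≤ (u-1)^2/(2*u) := by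
      apply div_le_div_of_nonneg_left (sq_nonneg _) (by linarith) (by linarith)
    linarith
  · have hlog := log_ge_aux1 hup (le_of_lt h1)
    have h2 : u * ((u^2-1)/(2*u)) ≤ u * Real.log u :=
      mul_le_mul_of_nonneg_left hlog (le_of_lt hup)
    have h3 : u * ((u^2-1)/(2*u)) = (u^2-1)/2 := by field_simp
    rw [h3] at h2
    have h4 : (u-1)^2/(2*(1+β)) ≤ (u-1)^2/2 := by
      apply div_le_div_of_nonneg_left (sq_nonneg _) (by norm_num) (by linarith)
    nlinarith

-- square bounds
lemma sqL {β u : ℝ} (hβ0 : 0 ≤ β) (hβ1 : β ≤ 1/4) (hl : 1 - β ≤ u) (hu : u ≤ 1 + β) :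
    (1-β)^2 * (u-1)^2 ≤ u^2 * Real.log u ^ 2 := by
  have hup : (0:ℝ) < u := by linarith
  have ha : u - 1 ≤ u * Real.log u := by
    have := log_ge_one_sub_inv hup
    have h2 : u * (1 - 1/u) ≤ u * Real.log u := mul_le_mul_of_nonneg_left this (le_of_lt hup)
    have h3 : u * (1 - 1/u) = u - 1 := by field_simp
    linarith
  have hb : u * Real.log u ≤ u * (u-1) := by
    have := log_le_sub_one hup
    exact mul_le_mul_of_nonneg_left this (le_of_lt hup)
  have hsq : u^2 * Real.log u ^ 2 = (u * Real.log u)^2 := by ring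
  rw [hsq]
  rcases le_or_gt 1 u with h1 | h1
  · have key1 : (u-1)^2 ≤ (u * Real.log u)^2 := by
      nlinarith [mul_nonneg (by linarith : (0:ℝ) ≤ u * Real.log u - (u-1))
        (by linarith : (0:ℝ) ≤ u * Real.log u + (u-1))]
    have key2 : (1-β)^2 * (u-1)^2 ≤ (u-1)^2 := by
      nlinarith [mul_nonneg (by nlinarith : (0:ℝ) ≤ 1-(1-β)^2) (sq_nonneg (u-1))]
    linarith
  · have hneg : u * (u-1) ≤ 0 := by nlinarith
    have key1 : (u * (u-1))^2 ≤ (u * Real.log u)^2 := by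
      nlinarith [mul_nonneg (by linarith : (0:ℝ) ≤ u * (u-1) - u * Real.log u)
        (by linarith : (0:ℝ) ≤ -(u * Real.log u + u * (u-1)))]
    have key2 : (1-β)^2 * (u-1)^2 ≤ (u * (u-1))^2 := by
      nlinarith [mul_nonneg (by nlinarith : (0:ℝ) ≤ u^2-(1-β)^2) (sq_nonneg (u-1))]
    linarith

lemma sqU {β u : ℝ} (hβ0 : 0 ≤ β) (hβ1 : β ≤ 1/4) (hl : 1 - β ≤ u) (hu : u ≤ 1 + β) :
    u^2 * Real.log u ^ 2 ≤ (1+β)^2 * (u-1)^2 := by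
  have hup : (0:ℝ) < u := by linarith
  have ha : u - 1 ≤ u * Real.log u := by
    have := log_ge_one_sub_inv hup
    have h2 : u * (1 - 1/u) ≤ u * Real.log u := mul_le_mul_of_nonneg_left this (le_of_lt hup)
    have h3 : u * (1 - 1/u) = u - 1 := by field_simp
    linarith
  have hb : u * Real.log u ≤ u * (u-1) := by
    have := log_le_sub_one hup
    exact mul_le_mul_of_nonneg_left this (le_of_lt hup)
  have hsq : u^2 * Real.log u ^ 2 = (u * Real.log u)^2 := by ring
  rw [hsq]
  rcases le_or_gt 1 u with h1 | h1
  · have key1 : (u * Real.log u)^2 ≤ (u * (u-1))^2 := by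
      nlinarith [mul_nonneg (by linarith : (0:ℝ) ≤ u * (u-1) - u * Real.log u)
        (by nlinarith : (0:ℝ) ≤ u * (u-1) + u * Real.log u)]
    have key2 : (u * (u-1))^2 ≤ (1+β)^2 * (u-1)^2 := by
      nlinarith [mul_nonneg (by nlinarith : (0:ℝ) ≤ (1+β)^2-u^2) (sq_nonneg (u-1))]
    linarith
  · have key1 : (u * Real.log u)^2 ≤ (u-1)^2 := by
      nlinarith [mul_nonneg (by linarith : (0:ℝ) ≤ u * Real.log u - (u-1))
        (by nlinarith : (0:ℝ) ≤ -(u-1) - u * Real.log u)]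
    have key2 : (u-1)^2 ≤ (1+β)^2 * (u-1)^2 := by
      nlinarith [mul_nonneg (by nlinarith : (0:ℝ) ≤ (1+β)^2-1) (sq_nonneg (u-1))]
    linarith

-- constant bounds
lemma CL {β : ℝ} (hβ0 : 0 ≤ β) (hβ1 : β ≤ 1/4) :
    2*(1-β) + 6*(1-β)*Real.log (1-β) + 6*(1-β)*Real.log (1-β)^2 ≤ 2*(1-β)^3 := by
  have hb : (0:ℝ) < 1 - β := by linarith
  set t := Real.log (1-β) with ht
  have ht1 : t ≤ -β := by
    have := log_le_sub_one hb; linarith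
  have ht2 : -β ≤ (1-β)*t := by
    have h := log_ge_one_sub_inv hb
    have h2 : (1-β) * (1 - 1/(1-β)) ≤ (1-β) * t := mul_le_mul_of_nonneg_left h (le_of_lt hb)
    have h3 : (1-β) * (1 - 1/(1-β)) = -β := by field_simp <;> ring
    linarith
  nlinarith [mul_nonneg (by linarith : (0:ℝ) ≤ -(t+β)) (by linarith : (0:ℝ) ≤ (1-β)*t+β),
    mul_nonneg (by linarith : (0:ℝ) ≤ -(t+β)) hβ0, sq_nonneg t, sq_nonneg β,
    mul_nonneg hβ0 hβ0, mul_nonneg (mul_nonneg hβ0 hβ0) hβ0]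

lemma CU {β : ℝ} (hβ0 : 0 ≤ β) (hβ1 : β ≤ 1/4) :
    2*(1+β)^3 ≤ 2*(1+β) + 6*(1+β)*Real.log (1+β) + 6*(1+β)*Real.log (1+β)^2 := by
  have hb : (0:ℝ) < 1 + β := by linarith
  set s := Real.log (1+β) with hs
  have hs0 : 0 ≤ s := Real.log_nonneg (by linarith)
  have hs1 : β ≤ (1+β)*s := by
    have h := log_ge_one_sub_inv hb
    have h2 : (1+β) * (1 - 1/(1+β)) ≤ (1+β) * s := mul_le_mul_of_nonneg_left h (le_of_lt hb)
    have h3 : (1+β) * (1 - 1/(1+β)) = β := by field_simp; ring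
    linarith
  have h1 : (0:ℝ) ≤ (1+β)*s - β := by linarith
  nlinarith [mul_nonneg h1 hs0, mul_nonneg h1 h1, mul_nonneg h1 hβ0, sq_nonneg s,
    mul_nonneg hβ0 hβ0, mul_nonneg (mul_nonneg hβ0 hβ0) hβ0]

-- pointwise bounds
lemma lower_pt {β u : ℝ} (hβ0 : 0 ≤ β) (hβ1 : β ≤ 1/4) (hl : 1 - β ≤ u) (hu : u ≤ 1 + β) :
    (2*(1-β) + 6*(1-β)*Real.log (1-β) + 6*(1-β)*Real.log (1-β)^2) * (u * Real.log u - u + 1)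
      ≤ u^2 * Real.log u ^ 2 := by
  have hb : (0:ℝ) < 1 - β := by linarith
  have hg0 : 0 ≤ u * Real.log u - u + 1 := by
    have := gB hβ0 hβ1 hl hu
    have h0 : 0 ≤ (u-1)^2 / (2*(1+β)) := by positivity
    linarith
  have hcl := CL hβ0 hβ1
  have hga := gA hβ0 hβ1 hl hu
  have hsl := sqL hβ0 hβ1 hl hu
  have step1 : (2*(1-β) + 6*(1-β)*Real.log (1-β) + 6*(1-β)*Real.log (1-β)^2) * (u * Real.log u - u + 1)
      ≤ 2*(1-β)^3 * (u * Real.log u - u + 1) := mul_le_mul_of_nonneg_right hcl hg0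
  have step2 : 2*(1-β)^3 * (u * Real.log u - u + 1) ≤ 2*(1-β)^3 * ((u-1)^2 / (2*(1-β))) :=
    mul_le_mul_of_nonneg_left hga (by positivity)
  have step3 : 2*(1-β)^3 * ((u-1)^2 / (2*(1-β))) = (1-β)^2 * (u-1)^2 := by
    field_simp
  linarith
lemma upper_pt {β u : ℝ} (hβ0 : 0 ≤ β) (hβ1 : β ≤ 1/4) (hl : 1 - β ≤ u) (hu : u ≤ 1 + β) :
    u^2 * Real.log u ^ 2 ≤
      (2*(1+β) + 6*(1+β)*Real.log (1+β) + 6*(1+β)*Real.log (1+β)^2) * (u * Real.log u - u + 1) := by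
  have hb : (0:ℝ) < 1 + β := by linarith
  have hg0 : 0 ≤ u * Real.log u - u + 1 := by
    have := gB hβ0 hβ1 hl hu
    have h0 : 0 ≤ (u-1)^2 / (2*(1+β)) := by positivity
    linarith
  have hcu := CU hβ0 hβ1
  have hgb := gB hβ0 hβ1 hl hu
  have hsu := sqU hβ0 hβ1 hl hu
  have step2 : 2*(1+β)^3 * ((u-1)^2 / (2*(1+β))) ≤ 2*(1+β)^3 * (u * Real.log u - u + 1) :=
    mul_le_mul_of_nonneg_left hgb (by positivity)
  have step3 : 2*(1+β)^3 * ((u-1)^2 / (2*(1+β))) = (1+β)^2 * (u-1)^2 := by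
    field_simp
  have step1 : 2*(1+β)^3 * (u * Real.log u - u + 1) ≤
      (2*(1+β) + 6*(1+β)*Real.log (1+β) + 6*(1+β)*Real.log (1+β)^2) * (u * Real.log u - u + 1) :=
    mul_le_mul_of_nonneg_right hcu hg0
  linarith

theorem stmt_6 (n : ℕ) (hn : 1 ≤ n) (β : ℝ) (hβ0 : 0 ≤ β) (hβ1 : β ≤ 1 / 4)
    (u : Fin n → ℝ) (hsum : ∑ j, u j = (n : ℝ))
    (hlb : ∀ j, 1 - β ≤ u j) (hub : ∀ j, u j ≤ 1 + β) :
    (2 * (1 - β) + 6 * (1 - β) * Real.log (1 - β) + 6 * (1 - β) * Real.log (1 - β) ^ 2)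
        * n * entropyDelta n u ≤ Delta22 n u ∧
      Delta22 n u ≤
        (2 * (1 + β) + 6 * (1 + β) * Real.log (1 + β) + 6 * (1 + β) * Real.log (1 + β) ^ 2)
          * n * entropyDelta n u := by
  have hn0 : (n:ℝ) ≠ 0 := by
    exact Nat.cast_ne_zero.mpr (by omega)
  have hδ : ∀ c : ℝ, c * n * entropyDelta n u = c * ∑ j, u j * Real.log (u j) := by
    intro c
    unfold entropyDelta
    field_simp
  have hgsum : ∑ j, (u j * Real.log (u j) - u j + 1) = ∑ j, u j * Real.log (u j) := by
    rw [Finset.sum_add_distrib, Finset.sum_sub_distrib, hsum]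
    simp [Finset.card_univ]
  constructor
  · rw [hδ, ← hgsum, Finset.mul_sum]
    unfold Delta22
    apply Finset.sum_le_sum
    intro j _
    have h := lower_pt hβ0 hβ1 (hlb j) (hub j)
    convert h using 2 <;> ring
  · rw [hδ, ← hgsum, Finset.mul_sum]
    unfold Delta22
    apply Finset.sum_le_sum
    intro j _
    have h := upper_pt hβ0 hβ1 (hlb j) (hub j)
    convert h using 2 <;> ring
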